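/- Let K be a totally real number field of degree d with an order O, and suppose there exist δ ∈ O^∨ totally positive and n totally positive elements α_1, ..., α_n ∈ O, pairwise distinct, with Tr(δα_i) = 1 for all i. Then every classical universal quadratic form over O has rank at least n/d. -/

import Mathlib

open NumberField in
/-- Trace of a totally positive element of a totally real field is positive. -/
lemma trace_pos_of_totally_positive (K : Type*) [Field K] [NumberField K]
    (htotreal : ∀ v : InfinitePlace K, v.IsReal)
    (x : K) (hx : ∀ φ : K →+* ℝ, 0 < φ x) : 0 < Algebra.trace ℚ K x := by
  have h := trace_eq_sum_embeddings (K := ℚ) (L := K) (E := ℂ) (x := x)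
  have hre : ((Algebra.trace ℚ K x : ℚ) : ℝ) = ∑ σ : K →ₐ[ℚ] ℂ, (σ x).re := by
    have := congrArg Complex.re h
    simpa using this
  have hpos : ∀ σ : K →ₐ[ℚ] ℂ, 0 < (σ x).re := by
    intro σ
    have hreal : ComplexEmbedding.IsReal (σ : K →+* ℂ) :=
      InfinitePlace.isReal_of_mk_isReal (htotreal _)
    have hemb := ComplexEmbedding.IsReal.coe_embedding_apply hreal x
    have hlt := hx hreal.embedding
    rw [show (σ x).re = ((hreal.embedding x : ℂ)).re by rw [hemb]; rfl]
    rw [Complex.ofReal_re]; exact hlt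
  have hne : Nonempty (K →ₐ[ℚ] ℂ) := ⟨IsAlgClosed.lift⟩
  have hsum : (0 : ℝ) < ∑ σ : K →ₐ[ℚ] ℂ, (σ x).re :=
    Finset.sum_pos (fun σ _ => hpos σ) Finset.univ_nonempty
  rw [← hre] at hsum
  exact_mod_cast hsum

/-- The `ℚ`-linear map `u ↦ δ * ∑ j k, M j k * u j * w k`. -/
noncomputable def bilinMapAux (K : Type*) [Field K] [NumberField K]
    (δ : K) (r : ℕ) (M : Matrix (Fin r) (Fin r) K) (w : Fin r → K) :
    (Fin r → K) →ₗ[ℚ] K where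
  toFun u := δ * ∑ j, ∑ k, M j k * u j * w k
  map_add' u u' := by
    have h : ∀ j k, M j k * ((u + u') j) * w k
        = M j k * u j * w k + M j k * u' j * w k := by
      intro j k; simp only [Pi.add_apply]; ring
    simp_rw [h, Finset.sum_add_distrib, mul_add]
  map_smul' c u := by
    have h : ∀ j k, M j k * ((c • u) j) * w k
        = c • (M j k * u j * w k) := by
      intro j k
      simp only [Pi.smul_apply, mul_smul_comm, smul_mul_assoc]
    simp_rw [h, ← Finset.smul_sum, mul_smul_comm, RingHom.id_apply]

/-- The `ℚ`-linear map `u ↦ Tr (δ * ∑ j k, M j k * u j * w k)`. -/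
noncomputable def traceFormAux (K : Type*) [Field K] [NumberField K]
    (δ : K) (r : ℕ) (M : Matrix (Fin r) (Fin r) K) (w : Fin r → K) :
    (Fin r → K) →ₗ[ℚ] ℚ :=
  (Algebra.trace ℚ K).comp (bilinMapAux K δ r M w)

lemma traceFormAux_apply (K : Type*) [Field K] [NumberField K]
    (δ : K) (r : ℕ) (M : Matrix (Fin r) (Fin r) K) (w u : Fin r → K) :
    traceFormAux K δ r M w u
      = Algebra.trace ℚ K (δ * ∑ j, ∑ k, M j k * u j * w k) := rfl

open NumberField in
theorem classical_universal_rank_lower_bound (K : Type*) [Field K] [NumberField K]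
    (htotreal : ∀ v : InfinitePlace K, v.IsReal)
    -- O is an order in K
    (O : Subring K) (hOint : ∀ x ∈ O, IsIntegral ℤ x)
    (hOfull : ∀ x : K, ∃ m : ℤ, m ≠ 0 ∧ (m : K) * x ∈ O)
    -- δ is a totally positive element of the codifferent of O
    (δ : K) (hδpos : ∀ φ : K →+* ℝ, 0 < φ δ)
    (hδcod : ∀ β ∈ O, ∃ t : ℤ, Algebra.trace ℚ K (δ * β) = t)
    -- n pairwise distinct totally positive elements of O of trace one
    (n : ℕ) (α : Fin n → K) (hαinj : Function.Injective α)
    (hαO : ∀ i, α i ∈ O) (hαpos : ∀ i, ∀ φ : K →+* ℝ, 0 < φ (α i))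
    (hαtr : ∀ i, Algebra.trace ℚ K (δ * α i) = 1)
    -- Q is a classical totally positive universal quadratic form of rank r over O,
    -- given by its symmetric Gram matrix M with entries in O
    (r : ℕ) (M : Matrix (Fin r) (Fin r) K)
    (hMsym : M.IsSymm) (hMO : ∀ i j, M i j ∈ O)
    (hQpos : ∀ v : Fin r → K, (∀ i, v i ∈ O) → v ≠ 0 →
      ∀ φ : K →+* ℝ, 0 < φ (∑ i, ∑ j, M i j * v i * v j))
    (hQuniv : ∀ x ∈ O, (∀ φ : K →+* ℝ, 0 < φ x) →
      ∃ v : Fin r → K, (∀ i, v i ∈ O) ∧ ∑ i, ∑ j, M i j * v i * v j = x) :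
    n ≤ r * Module.finrank ℚ K := by
  classical
  -- choose representatives
  choose v hvO hvQ using fun i => hQuniv (α i) (hαO i) (hαpos i)
  -- the bilinear form over `K`
  set B : (Fin r → K) → (Fin r → K) → K :=
    fun u w => ∑ j, ∑ k, M j k * u j * w k with hB
  have hvB : ∀ i, B (v i) (v i) = α i := fun i => hvQ i
  have htf : ∀ w u, traceFormAux K δ r M w u = Algebra.trace ℚ K (δ * B u w) :=
    fun w u => rfl
  -- B u w is in O for u, w in O^r
  have hBO : ∀ u w : Fin r → K, (∀ i, u i ∈ O) → (∀ i, w i ∈ O) → B u w ∈ O := by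
    intro u w hu hw
    exact Subring.sum_mem _ fun j _ => Subring.sum_mem _ fun k _ =>
      O.mul_mem (O.mul_mem (hMO j k) (hu j)) (hw k)
  -- symmetry of B
  have hBsym : ∀ u w, B w u = B u w := by
    intro u w
    simp only [hB]
    rw [Finset.sum_comm]
    refine Finset.sum_congr rfl fun j _ => Finset.sum_congr rfl fun k _ => ?_
    rw [hMsym.apply]; ring
  -- expansion of B on sums / negation
  have hBadd_left : ∀ u u' w, B (u + u') w = B u w + B u' w := by
    intro u u' w
    simp only [hB, ← Finset.sum_add_distrib]
    refine Finset.sum_congr rfl fun j _ => Finset.sum_congr rfl fun k _ => ?_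
    simp only [Pi.add_apply]; ring
  have hBneg_left : ∀ u w, B (-u) w = - B u w := by
    intro u w
    simp only [hB, ← Finset.sum_neg_distrib]
    refine Finset.sum_congr rfl fun j _ => Finset.sum_congr rfl fun k _ => ?_
    simp only [Pi.neg_apply]; ring
  have hBneg_right : ∀ u w, B u (-w) = - B u w := by
    intro u w
    rw [← hBsym u (-w), hBneg_left, hBsym u w]
  have hQexp : ∀ u w, B (u + w) (u + w) = B u u + B w w + (B u w + B u w) := by
    intro u w
    have h1 : ∀ x, B x (u + w) = B x u + B x w := by
      intro x
      rw [← hBsym x (u + w), hBadd_left, hBsym u x, hBsym w x]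
    rw [h1, hBadd_left, hBadd_left, hBsym w u]
    ring
  have hQneg : ∀ w, B (-w) (-w) = B w w := by
    intro w
    rw [hBneg_left, hBneg_right, neg_neg]
  -- positivity of the trace form on nonzero integral vectors
  have hqpos : ∀ u : Fin r → K, (∀ i, u i ∈ O) → u ≠ 0 →
      0 < Algebra.trace ℚ K (δ * B u u) := by
    intro u hu hu0
    apply trace_pos_of_totally_positive K htotreal
    intro φ
    rw [map_mul]
    exact mul_pos (hδpos φ) (hQpos u hu hu0 φ)
  -- the v i are pairwise distinct up to sign
  have hvne : ∀ i j, i ≠ j → v i ≠ v j ∧ v i ≠ -v j := by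
    intro i j hij
    constructor
    · intro h
      apply hαinj.ne hij
      rw [← hvB i, ← hvB j, h]
    · intro h
      apply hαinj.ne hij
      rw [← hvB i, ← hvB j, h, hQneg]
  -- orthogonality
  have hTorth : ∀ i j, i ≠ j → Algebra.trace ℚ K (δ * B (v i) (v j)) = 0 := by
    intro i j hij
    obtain ⟨t, ht⟩ := hδcod (B (v i) (v j)) (hBO _ _ (hvO i) (hvO j))
    have hsubO : ∀ k, (v i - v j) k ∈ O := fun k =>
      O.sub_mem (hvO i k) (hvO j k)
    have haddO : ∀ k, (v i + v j) k ∈ O := fun k =>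
      O.add_mem (hvO i k) (hvO j k)
    have hsub0 : v i - v j ≠ 0 := sub_ne_zero.mpr (hvne i j hij).1
    have hadd0 : v i + v j ≠ 0 := by
      intro h
      exact (hvne i j hij).2 (by rw [eq_neg_iff_add_eq_zero]; exact h)
    have hdi : Algebra.trace ℚ K (δ * B (v i) (v i)) = 1 := by
      rw [hvB i]; exact hαtr i
    have hdj : Algebra.trace ℚ K (δ * B (v j) (v j)) = 1 := by
      rw [hvB j]; exact hαtr j
    have hTsub : Algebra.trace ℚ K (δ * B (v i - v j) (v i - v j))
        = 2 - ((t : ℚ) + t) := by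
      rw [sub_eq_add_neg, hQexp, hQneg, hBneg_right]
      have hring : δ * (B (v i) (v i) + B (v j) (v j) + (-B (v i) (v j) + -B (v i) (v j)))
          = δ * B (v i) (v i) + δ * B (v j) (v j)
            - (δ * B (v i) (v j) + δ * B (v i) (v j)) := by ring
      rw [hring, map_sub, map_add, map_add, hdi, hdj, ht]
      ring
    have hTadd : Algebra.trace ℚ K (δ * B (v i + v j) (v i + v j))
        = 2 + ((t : ℚ) + t) := by
      rw [hQexp]
      have hring : δ * (B (v i) (v i) + B (v j) (v j) + (B (v i) (v j) + B (v i) (v j)))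
          = δ * B (v i) (v i) + δ * B (v j) (v j)
            + (δ * B (v i) (v j) + δ * B (v i) (v j)) := by ring
      rw [hring, map_add, map_add, map_add, hdi, hdj, ht]
      ring
    have h1 := hqpos _ hsubO hsub0
    have h2 := hqpos _ haddO hadd0
    rw [hTsub] at h1
    rw [hTadd] at h2
    have ht0 : t = 0 := by
      have h1' : (t : ℚ) < 1 := by linarith
      have h2' : (-1 : ℚ) < t := by linarith
      have h1'' : t < 1 := by exact_mod_cast h1'
      have h2'' : (-1 : ℤ) < t := by exact_mod_cast h2'
      omega
    rw [ht, ht0]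
    norm_num
  -- linear independence
  have hli : LinearIndependent ℚ v := by
    rw [Fintype.linearIndependent_iff]
    intro c hc j
    have h0 : traceFormAux K δ r M (v j) (∑ i, c i • v i) = 0 := by
      rw [hc, map_zero]
    rw [map_sum] at h0
    simp only [map_smul] at h0
    have hsingle : ∀ i, c i • traceFormAux K δ r M (v j) (v i)
        = if i = j then c i else 0 := by
      intro i
      by_cases h : i = j
      · subst h
        rw [htf]
        have hd : Algebra.trace ℚ K (δ * B (v i) (v i)) = 1 := by
          rw [hvB i]; exact hαtr i
        rw [hd]
        simp
      · rw [htf, hTorth i j h]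
        simp [h]
    rw [Finset.sum_congr rfl (fun i _ => hsingle i)] at h0
    simpa using h0
  have hcard := hli.fintype_card_le_finrank
  simp only [Fintype.card_fin] at hcard
  calc n ≤ Module.finrank ℚ (Fin r → K) := hcard
    _ = r * Module.finrank ℚ K := by
        rw [Module.finrank_pi_fintype]
        simp [Finset.sum_const, Fintype.card_fin]
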